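/- Let τ_m > 0 and let z be a complex number with Im(z) > 0. Then the error of the Chiarella–Reichel series approximation of the complex error function admits the exact representation (1/√π)·∫_0^{∞} exp(−τ²/4)·exp(izτ) dτ − [ i/(τ_m·z) − 2i·τ_m·z·∑_{n=1}^{∞} exp(−n²π²/τ_m²)/(n²π² − τ_m²z²) ] = (1/√π)·∫_0^{∞} ( exp(−τ²/4) − ∑_{k∈ℤ} exp(−(τ + 2kτ_m)²/4) )·exp(izτ) dτ. -/

import Mathlib

open Real MeasureTheory

lemma CR_summable_cexp {c : ℂ} (hc : 0 < c.re) (d : ℂ) :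
    Summable fun n : ℤ ↦ Complex.exp (-c * n ^ 2 + d * n) := by
  have h : Summable fun n : ℤ ↦ jacobiTheta₂_term n (d / (2 * π * Complex.I)) (c * Complex.I / π) := by
    rw [summable_jacobiTheta₂_term_iff]
    have h1 : (c * Complex.I / (π : ℂ)).im = c.re / π := by
      rw [Complex.div_ofReal_im, Complex.mul_I_im]
    rw [h1]
    exact div_pos hc Real.pi_pos
  refine h.congr fun n => ?_
  rw [jacobiTheta₂_term]
  congr 1
  have hπ : (π : ℂ) ≠ 0 := Complex.ofReal_ne_zero.mpr Real.pi_ne_zero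
  field_simp
  linear_combination ((n:ℂ)^2*c) * Complex.I_sq

lemma CR_summable_rexp {c : ℝ} (hc : 0 < c) (d : ℝ) :
    Summable fun n : ℤ ↦ Real.exp (-c * n ^ 2 + d * n) := by
  rw [← Complex.summable_ofReal]
  have h := CR_summable_cexp (c := (c : ℂ)) (by simpa using hc) (d : ℂ)
  refine h.congr fun n => ?_
  rw [Complex.ofReal_exp]
  congr 1
  push_cast
  ring

lemma CR_mulre (w : ℂ) (τ : ℝ) : (w * τ).re = w.re * τ := by
  simp [Complex.mul_re]

lemma CR_integrable {w : ℂ} (hw : w.re < 0) :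
    IntegrableOn (fun τ : ℝ ↦ Complex.exp (w * τ)) (Set.Ioi 0) := by
  have hcont : Continuous fun τ : ℝ ↦ Complex.exp (w * τ) :=
    Complex.continuous_exp.comp (continuous_const.mul Complex.continuous_ofReal)
  refine Integrable.mono' (exp_neg_integrableOn_Ioi 0 (b := -w.re) (by linarith))
    hcont.aestronglyMeasurable ?_
  filter_upwards with τ
  rw [Complex.norm_exp, CR_mulre]
  simp

lemma CR_integral {w : ℂ} (hw : w.re < 0) :
    ∫ τ : ℝ in Set.Ioi 0, Complex.exp (w * τ) = -w⁻¹ := by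
  have hw0 : w ≠ 0 := fun h => by simp [h] at hw
  have hderiv : ∀ x : ℝ, HasDerivAt (fun τ : ℝ ↦ Complex.exp (w * τ) / w)
      (Complex.exp (w * x)) x := by
    intro x
    have h2 : HasDerivAt (fun t : ℂ ↦ w * t) w (x : ℂ) := by
      simpa using (hasDerivAt_id (x : ℂ)).const_mul w
    have h3 := (Complex.hasDerivAt_exp (w * x)).comp (x : ℂ) h2
    have h4 := h3.div_const w
    have h5 : Complex.exp (w * x) * w / w = Complex.exp (w * x) :=
      mul_div_cancel_right₀ _ hw0
    rw [h5] at h4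
    exact h4.comp_ofReal
  have htend : Filter.Tendsto (fun τ : ℝ ↦ Complex.exp (w * τ) / w)
      Filter.atTop (nhds 0) := by
    rw [tendsto_zero_iff_norm_tendsto_zero]
    have heq : (fun τ : ℝ ↦ ‖Complex.exp (w * τ) / w‖)
        = fun τ : ℝ ↦ Real.exp (w.re * τ) / ‖w‖ := by
      funext τ
      rw [norm_div, Complex.norm_exp, CR_mulre]
    rw [heq]
    have h5 : Filter.Tendsto (fun τ : ℝ ↦ w.re * τ) Filter.atTop Filter.atBot := by
      have h6 : Filter.Tendsto (fun τ : ℝ ↦ (-w.re) * τ) Filter.atTop Filter.atTop :=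
        Filter.Tendsto.const_mul_atTop (by linarith) Filter.tendsto_id
      have h7 := Filter.tendsto_neg_atBot_iff.mpr h6
      simp only [neg_mul, neg_neg] at h7
      exact h7
    simpa using (Real.tendsto_exp_atBot.comp h5).div_const ‖w‖
  have h := integral_Ioi_of_hasDerivAt_of_tendsto (a := (0:ℝ))
      (hderiv 0).continuousAt.continuousWithinAt (fun x _ => hderiv x)
      (CR_integrable hw) htend
  rw [h]
  simp

lemma CR_theta (τm : ℝ) (hτm : 0 < τm) (τ : ℝ) :
    ((∑' k : ℤ, Real.exp (-(τ + 2 * k * τm) ^ 2 / 4) : ℝ) : ℂ) =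
      ((Real.sqrt π / τm : ℝ) : ℂ) *
        ∑' n : ℤ, ((Real.exp (-(π ^ 2 * (n : ℝ) ^ 2) / τm ^ 2) : ℝ) : ℂ) *
          Complex.exp (((-(π * n * τ) / τm : ℝ) : ℂ) * Complex.I) := by
  have hτm0 : (τm : ℂ) ≠ 0 := Complex.ofReal_ne_zero.mpr hτm.ne'
  have hπ : (π : ℂ) ≠ 0 := Complex.ofReal_ne_zero.mpr Real.pi_ne_zero
  have hsπ : Real.sqrt π ≠ 0 := (Real.sqrt_pos.mpr Real.pi_pos).ne'
  have ha : (0:ℝ) < ((((π / τm ^ 2 : ℝ)) : ℂ)).re := by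
    rw [Complex.ofReal_re]; positivity
  have key := Complex.tsum_exp_neg_quadratic ha (-Complex.I * τ / (2 * τm))
  have hL : (∑' n : ℤ, Complex.exp (-(π:ℂ) * ((π / τm ^ 2 : ℝ) : ℂ) * (n:ℂ) ^ 2
        + 2 * (π:ℂ) * (-Complex.I * τ / (2 * τm)) * (n:ℂ)))
      = ∑' n : ℤ, ((Real.exp (-(π ^ 2 * (n : ℝ) ^ 2) / τm ^ 2) : ℝ) : ℂ) *
          Complex.exp (((-(π * n * τ) / τm : ℝ) : ℂ) * Complex.I) := by
    refine tsum_congr fun n => ?_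
    rw [Complex.ofReal_exp, ← Complex.exp_add]
    congr 1
    push_cast
    field_simp
  have hR : (∑' n : ℤ, Complex.exp (-(π:ℂ) / ((π / τm ^ 2 : ℝ) : ℂ)
        * ((n:ℂ) + Complex.I * (-Complex.I * τ / (2 * τm))) ^ 2))
      = ((∑' k : ℤ, Real.exp (-(τ + 2 * k * τm) ^ 2 / 4) : ℝ) : ℂ) := by
    rw [Complex.ofReal_tsum]
    refine tsum_congr fun n => ?_
    rw [Complex.ofReal_exp]
    congr 1
    push_cast
    field_simp
    linear_combination (16*(τm:ℂ)*(n:ℂ)*(τ:ℂ) + 4*(τ:ℂ)^2*(1 - Complex.I^2)) * Complex.I_sq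
  have ha12 : (1:ℂ) / (((π / τm ^ 2 : ℝ) : ℂ)) ^ (1/2 : ℂ) = ((τm / Real.sqrt π : ℝ) : ℂ) := by
    have h1 : (((π / τm ^ 2 : ℝ) : ℂ)) ^ (1/2 : ℂ) = ((Real.sqrt π / τm : ℝ) : ℂ) := by
      rw [show (1/2 : ℂ) = ((1/2 : ℝ) : ℂ) by norm_num,
        ← Complex.ofReal_cpow (by positivity)]
      congr 1
      rw [← Real.sqrt_eq_rpow, Real.sqrt_div Real.pi_pos.le, Real.sqrt_sq hτm.le]
    rw [h1]
    rw [← Complex.ofReal_one, ← Complex.ofReal_div]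
    congr 1
    field_simp
  rw [hL, ha12, hR] at key
  rw [key, ← mul_assoc, ← Complex.ofReal_mul]
  have : Real.sqrt π / τm * (τm / Real.sqrt π) = 1 := by field_simp
  rw [this, Complex.ofReal_one, one_mul]

/-- For `τm > 0` and `z : ℂ` with `Im z > 0`, the error of the Chiarella–Reichel series
approximation of the complex error function admits the exact representation
`(1/√π)·∫_0^∞ e^{−τ²/4}·e^{izτ} dτ − [i/(τm z) − 2i·τm·z·∑_{n=1}^∞ e^{−n²π²/τm²}/(n²π² − τm²z²)]
  = (1/√π)·∫_0^∞ (e^{−τ²/4} − ∑_{k∈ℤ} e^{−(τ+2kτm)²/4})·e^{izτ} dτ`. -/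
theorem chiarella_reichel_error_rep (τm : ℝ) (hτm : 0 < τm) (z : ℂ) (hz : 0 < z.im) :
    (1 / (Real.sqrt π : ℂ)) *
        (∫ τ in Set.Ioi (0:ℝ),
          Complex.exp (-(τ : ℂ) ^ 2 / 4) * Complex.exp (Complex.I * z * τ)) -
      (Complex.I / ((τm : ℂ) * z) -
        2 * Complex.I * (τm : ℂ) * z *
          ∑' n : ℕ,
            Complex.exp (-((n : ℂ) + 1) ^ 2 * (π : ℂ) ^ 2 / (τm : ℂ) ^ 2) /
              (((n : ℂ) + 1) ^ 2 * (π : ℂ) ^ 2 - (τm : ℂ) ^ 2 * z ^ 2)) =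
      (1 / (Real.sqrt π : ℂ)) *
        ∫ τ in Set.Ioi (0:ℝ),
          ((Real.exp (-τ ^ 2 / 4) -
              ∑' k : ℤ, Real.exp (-(τ + 2 * k * τm) ^ 2 / 4) : ℝ) : ℂ) *
            Complex.exp (Complex.I * z * τ) := by
  have hy : 0 < z.im := hz
  have hτm0 : (τm : ℂ) ≠ 0 := Complex.ofReal_ne_zero.mpr hτm.ne'
  have hπ : (π : ℂ) ≠ 0 := Complex.ofReal_ne_zero.mpr Real.pi_ne_zero
  have hsπ : Real.sqrt π ≠ 0 := (Real.sqrt_pos.mpr Real.pi_pos).ne'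
  have hsπC : ((Real.sqrt π : ℝ) : ℂ) ≠ 0 := Complex.ofReal_ne_zero.mpr hsπ
  have hz0 : z ≠ 0 := fun h => by simp [h] at hy
  set E : ℤ → ℝ := fun n ↦ Real.exp (-(π ^ 2 * (n : ℝ) ^ 2) / τm ^ 2) with hE
  set ρ : ℤ → ℝ := fun n ↦ π * n / τm with hρ
  set φ : ℤ → ℝ → ℂ := fun n τ ↦ ((E n : ℝ) : ℂ) *
      Complex.exp (((-(π * n * τ) / τm : ℝ) : ℂ) * Complex.I) with hφ
  set g : ℤ → ℝ → ℂ := fun n τ ↦ ((E n : ℝ) : ℂ) *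
      Complex.exp ((Complex.I * (z - ((ρ n : ℝ) : ℂ))) * τ) with hg
  set q : ℤ → ℂ := fun n ↦ ((E n : ℝ) : ℂ) *
      (-(Complex.I * (z - ((ρ n : ℝ) : ℂ)))⁻¹) with hq
  -- basic facts
  have hzρ : ∀ n : ℤ, z - ((ρ n : ℝ) : ℂ) ≠ 0 := by
    intro n h
    have h2 := congrArg Complex.im h
    simp only [Complex.sub_im, Complex.ofReal_im, Complex.zero_im, sub_zero] at h2
    exact hy.ne' h2
  have hre : ∀ n : ℤ, (Complex.I * (z - ((ρ n : ℝ) : ℂ))).re = -z.im := by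
    intro n
    simp [Complex.mul_re]
  have hEpos : ∀ n : ℤ, 0 < E n := fun n => Real.exp_pos _
  have hEsum : Summable E := by
    have h := CR_summable_rexp (c := π ^ 2 / τm ^ 2) (by positivity) 0
    refine h.congr fun n => ?_
    rw [hE]
    congr 1
    ring
  have hez : ∀ τ : ℝ, ‖Complex.exp (Complex.I * z * τ)‖ = Real.exp (-z.im * τ) := by
    intro τ
    rw [show Complex.I * z * (τ:ℂ) = (Complex.I * z) * τ by ring,
      Complex.norm_exp, CR_mulre]
    congr 2
    simp [Complex.mul_re]
  -- Φ, continuity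
  have hφcont : ∀ n : ℤ, Continuous (φ n) := by
    intro n
    apply continuous_const.mul
    exact Complex.continuous_exp.comp (Continuous.mul (by fun_prop) continuous_const)
  have hφnorm : ∀ (n : ℤ) (τ : ℝ), ‖φ n τ‖ = E n := by
    intro n τ
    rw [hφ]
    simp only [norm_mul, Complex.norm_real, Real.norm_eq_abs,
      Complex.norm_exp_ofReal_mul_I, mul_one]
    exact abs_of_pos (hEpos n)
  have hΦcont : Continuous (fun τ : ℝ ↦ ∑' n : ℤ, φ n τ) :=
    continuous_tsum hφcont hEsum (fun n τ => le_of_eq (hφnorm n τ))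
  have hΦnorm : ∀ τ : ℝ, ‖∑' n : ℤ, φ n τ‖ ≤ ∑' n : ℤ, E n := by
    intro τ
    have := norm_tsum_le_tsum_norm (f := fun n : ℤ ↦ φ n τ)
      (by refine hEsum.congr fun n => (hφnorm n τ).symm)
    simpa only [hφnorm] using this
  -- integrability of each g n and values
  have hgw : ∀ n : ℤ, (Complex.I * (z - ((ρ n : ℝ) : ℂ))).re < 0 := by
    intro n; rw [hre]; linarith
  have hgint : ∀ n : ℤ, IntegrableOn (g n) (Set.Ioi 0) := by
    intro n
    exact (CR_integrable (hgw n)).const_mul _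
  have hgnorm : ∀ (n : ℤ) (τ : ℝ), ‖g n τ‖ = E n * Real.exp (-z.im * τ) := by
    intro n τ
    rw [hg]
    simp only [norm_mul, Complex.norm_real, Real.norm_eq_abs, Complex.norm_exp, CR_mulre]
    rw [abs_of_pos (hEpos n), hre]
  have hKint : IntegrableOn (fun τ : ℝ ↦ Real.exp (-z.im * τ)) (Set.Ioi 0) :=
    exp_neg_integrableOn_Ioi 0 hy
  have hnormint : ∀ n : ℤ, (∫ τ in Set.Ioi (0:ℝ), ‖g n τ‖)
      = E n * ∫ τ in Set.Ioi (0:ℝ), Real.exp (-z.im * τ) := by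
    intro n
    simp_rw [hgnorm]
    rw [MeasureTheory.integral_const_mul]
  have hsum2 : Summable fun n : ℤ ↦ ∫ τ in Set.Ioi (0:ℝ), ‖g n τ‖ := by
    simp_rw [hnormint]
    exact hEsum.mul_right _
  have hswap : (∑' n : ℤ, ∫ τ in Set.Ioi (0:ℝ), g n τ)
      = ∫ τ in Set.Ioi (0:ℝ), ∑' n : ℤ, g n τ :=
    integral_tsum_of_summable_integral_norm hgint hsum2
  have hval : ∀ n : ℤ, (∫ τ in Set.Ioi (0:ℝ), g n τ) = q n := by
    intro n
    rw [hg, hq]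
    simp only
    rw [MeasureTheory.integral_const_mul, CR_integral (hgw n)]
  -- pointwise: Φ τ * e^{izτ} = ∑' g n τ
  have hpt2 : ∀ τ : ℝ, (∑' n : ℤ, φ n τ) * Complex.exp (Complex.I * z * τ)
      = ∑' n : ℤ, g n τ := by
    intro τ
    rw [← tsum_mul_right]
    refine tsum_congr fun n => ?_
    rw [hφ, hg]
    simp only
    rw [mul_assoc, ← Complex.exp_add]
    congr 2
    rw [hρ]
    push_cast
    field_simp
    ring
  -- the bracket equals (1/√π) ∫ Gp e
  have hGp : ∀ τ : ℝ, ((∑' k : ℤ, Real.exp (-(τ + 2 * k * τm) ^ 2 / 4) : ℝ) : ℂ)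
      = ((Real.sqrt π / τm : ℝ) : ℂ) * ∑' n : ℤ, φ n τ := by
    intro τ
    exact CR_theta τm hτm τ
  -- summability of q
  have hqsum : Summable q := by
    refine Summable.of_norm_bounded (g := fun n => E n * (z.im)⁻¹) (hEsum.mul_right _) ?_
    intro n
    rw [hq]
    simp only
    have h1 : ‖((E n : ℝ) : ℂ)‖ = E n := by
      rw [Complex.norm_real, Real.norm_eq_abs, abs_of_pos (hEpos n)]
    have h2 : ‖(-(Complex.I * (z - ((ρ n : ℝ) : ℂ)))⁻¹)‖ ≤ (z.im)⁻¹ := by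
      rw [norm_neg, norm_inv]
      refine inv_anti₀ hy ?_
      have h3 : ‖Complex.I * (z - ((ρ n : ℝ) : ℂ))‖ = ‖z - ((ρ n : ℝ) : ℂ)‖ := by
        rw [norm_mul, Complex.norm_I, one_mul]
      rw [h3]
      have h4 : |(z - ((ρ n : ℝ) : ℂ)).im| ≤ ‖z - ((ρ n : ℝ) : ℂ)‖ :=
        Complex.abs_im_le_norm _
      rw [Complex.sub_im, Complex.ofReal_im, sub_zero, abs_of_pos hy] at h4
      exact h4
    calc ‖((E n : ℝ) : ℂ) * (-(Complex.I * (z - ((ρ n : ℝ) : ℂ)))⁻¹)‖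
        = ‖((E n : ℝ) : ℂ)‖ * ‖(-(Complex.I * (z - ((ρ n : ℝ) : ℂ)))⁻¹)‖ := norm_mul _ _
      _ ≤ E n * (z.im)⁻¹ := by rw [h1]; exact mul_le_mul_of_nonneg_left h2 (hEpos n).le
  -- ℕ-indexed summabilities
  have hq_nat : Summable fun n : ℕ ↦ q (n : ℤ) :=
    hqsum.comp_injective (fun a b h => by exact_mod_cast h)
  have hq1 : Summable fun n : ℕ ↦ q ((n : ℤ) + 1) :=
    hqsum.comp_injective (i := fun n : ℕ => (n : ℤ) + 1) (fun a b h => by simp only [add_left_inj, Nat.cast_inj] at h; exact h)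
  have hq2 : Summable fun n : ℕ ↦ q (-((n : ℤ) + 1)) :=
    hqsum.comp_injective (i := fun n : ℕ => -((n : ℤ) + 1)) (fun a b h => by simp only [neg_inj, add_left_inj, Nat.cast_inj] at h; exact h)
  -- the denominators are nonzero
  have hρ1 : ∀ n : ℕ, ((ρ ((n:ℤ)+1) : ℝ) : ℂ) = (π:ℂ) * ((n:ℂ)+1) / (τm:ℂ) := by
    intro n; rw [hρ]; push_cast; ring
  have hρ2 : ∀ n : ℕ, ((ρ (-((n:ℤ)+1)) : ℝ) : ℂ) = -((π:ℂ) * ((n:ℂ)+1) / (τm:ℂ)) := by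
    intro n; rw [hρ]; push_cast; ring
  have hD : ∀ n : ℕ, ((n : ℂ) + 1) ^ 2 * (π:ℂ) ^ 2 - (τm:ℂ) ^ 2 * z ^ 2 ≠ 0 := by
    intro n h
    have h1 := hzρ ((n:ℤ)+1)
    have h2 := hzρ (-((n:ℤ)+1))
    rw [hρ1] at h1
    rw [hρ2, sub_neg_eq_add] at h2
    refine mul_ne_zero h1 h2 ?_
    have hτm2 : ((τm:ℂ))^2 ≠ 0 := pow_ne_zero _ hτm0
    field_simp
    linear_combination -h
  have hq0 : q 0 = Complex.I / z := by
    rw [hq]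
    simp only
    have hE0 : E (0:ℤ) = 1 := by rw [hE]; simp
    have hρ0 : ρ (0:ℤ) = 0 := by rw [hρ]; simp
    rw [hE0, hρ0]
    simp only [Complex.ofReal_zero, Complex.ofReal_one, sub_zero, one_mul]
    rw [mul_inv, neg_mul_eq_neg_mul, Complex.inv_I]
    field_simp
  have hpair : ∀ n : ℕ, q ((n:ℤ)+1) + q (-((n:ℤ)+1)) =
      (-2*Complex.I*(τm:ℂ)^2*z) * (Complex.exp (-((n:ℂ)+1)^2*(π:ℂ)^2/(τm:ℂ)^2) /
        (((n:ℂ)+1)^2*(π:ℂ)^2 - (τm:ℂ)^2*z^2)) := by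
    intro n
    have hexp : Complex.exp (-((n:ℂ)+1)^2*(π:ℂ)^2/(τm:ℂ)^2) = ((E ((n:ℤ)+1) : ℝ) : ℂ) := by
      rw [hE, Complex.ofReal_exp]
      congr 1
      push_cast
      ring
    have hEneg : ((E (-((n:ℤ)+1)) : ℝ) : ℂ) = ((E ((n:ℤ)+1) : ℝ) : ℂ) := by
      rw [hE]
      push_cast
      congr 1
      ring
    have h1 := hzρ ((n:ℤ)+1)
    have h2 := hzρ (-((n:ℤ)+1))
    rw [hρ1] at h1
    rw [hρ2, sub_neg_eq_add] at h2
    have hinv : ∀ u : ℂ, -(Complex.I * u)⁻¹ = Complex.I * u⁻¹ := by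
      intro u
      rw [mul_inv, Complex.inv_I]
      ring
    have h1' : (τm:ℂ) * z - (π:ℂ) * ((n:ℂ)+1) ≠ 0 := by
      have hne := mul_ne_zero hτm0 h1
      rwa [show (τm:ℂ) * (z - (π:ℂ)*((n:ℂ)+1)/(τm:ℂ)) = (τm:ℂ)*z - (π:ℂ)*((n:ℂ)+1) from by
        field_simp] at hne
    have h2' : (τm:ℂ) * z + (π:ℂ) * ((n:ℂ)+1) ≠ 0 := by
      have hne := mul_ne_zero hτm0 h2
      rwa [show (τm:ℂ) * (z + (π:ℂ)*((n:ℂ)+1)/(τm:ℂ)) = (τm:ℂ)*z + (π:ℂ)*((n:ℂ)+1) from by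
        field_simp] at hne
    have h1'' : (τm:ℂ)*z + (-(π:ℂ) - (π:ℂ)*(n:ℂ)) ≠ 0 := fun hcon => h1' (by linear_combination hcon)
    have h2'' : (τm:ℂ)*z + (π:ℂ) + (π:ℂ)*(n:ℂ) ≠ 0 := fun hcon => h2' (by linear_combination hcon)
    have hDn := hD n
    rw [hq]
    simp only
    rw [hexp, hEneg, hρ1 n, hρ2 n, sub_neg_eq_add, hinv, hinv]
    set c : ℂ := ((E ((n:ℤ)+1) : ℝ) : ℂ) with hcdef
    set r : ℂ := (π:ℂ) * ((n:ℂ)+1) / (τm:ℂ) with hrdef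
    rw [show c * (Complex.I * (z - r)⁻¹) = (c * Complex.I) / (z - r) from by ring,
        show c * (Complex.I * (z + r)⁻¹) = (c * Complex.I) / (z + r) from by ring,
        div_add_div _ _ h1 h2,
        show (-2*Complex.I*(τm:ℂ)^2*z) * (c / (((n:ℂ)+1)^2*(π:ℂ)^2 - (τm:ℂ)^2*z^2))
          = (-2*Complex.I*(τm:ℂ)^2*z*c) / (((n:ℂ)+1)^2*(π:ℂ)^2 - (τm:ℂ)^2*z^2) from by ring,
        div_eq_div_iff (mul_ne_zero h1 h2) hDn]
    simp only [hrdef]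
    field_simp
    ring
  have hSsplit : ∑' n : ℤ, q n = q 0 + ((-2*Complex.I*(τm:ℂ)^2*z) *
      ∑' n : ℕ, Complex.exp (-((n:ℂ)+1)^2*(π:ℂ)^2/(τm:ℂ)^2) /
        (((n:ℂ)+1)^2*(π:ℂ)^2 - (τm:ℂ)^2*z^2)) := by
    rw [tsum_of_nat_of_neg_add_one hq_nat hq2]
    rw [hq_nat.tsum_eq_zero_add]
    have hc : (∑' n : ℕ, q (((n+1 : ℕ)) : ℤ)) = ∑' n : ℕ, q ((n:ℤ)+1) :=
      tsum_congr fun n => by push_cast; ring_nf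
    rw [Nat.cast_zero, hc, add_assoc, ← Summable.tsum_add hq1 hq2, tsum_congr hpair, tsum_mul_left]
  -- the bracket equals (1/√π) ∫ Gp·e
  have hbracket :
      Complex.I / ((τm:ℂ) * z) - 2 * Complex.I * (τm:ℂ) * z *
        (∑' n : ℕ, Complex.exp (-((n:ℂ)+1)^2*(π:ℂ)^2/(τm:ℂ)^2) /
          (((n:ℂ)+1)^2*(π:ℂ)^2 - (τm:ℂ)^2*z^2)) =
      (1 / (Real.sqrt π : ℂ)) * ∫ τ in Set.Ioi (0:ℝ),
        ((∑' k : ℤ, Real.exp (-(τ + 2*k*τm)^2/4) : ℝ) : ℂ) *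
          Complex.exp (Complex.I*z*τ) := by
    have hfeq : (fun τ : ℝ ↦ ((∑' k : ℤ, Real.exp (-(τ + 2*k*τm)^2/4) : ℝ) : ℂ) *
        Complex.exp (Complex.I*z*τ))
        = fun τ : ℝ ↦ ((Real.sqrt π / τm : ℝ) : ℂ) * ∑' n : ℤ, g n τ := by
      funext τ
      rw [hGp τ, mul_assoc, hpt2 τ]
    rw [hfeq, MeasureTheory.integral_const_mul, ← hswap,
      show (∑' n : ℤ, ∫ τ in Set.Ioi (0:ℝ), g n τ) = ∑' n : ℤ, q n from tsum_congr hval,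
      hSsplit, hq0]
    push_cast
    field_simp
    ring_nf
    congr 1; congr 1; congr 1
    refine tsum_congr fun n => ?_
    ring_nf
  -- integrability of both integrands
  have hint2' : IntegrableOn
      (fun τ : ℝ ↦ (∑' n : ℤ, φ n τ) * Complex.exp (Complex.I*z*τ)) (Set.Ioi 0) := by
    refine Integrable.mono' (hKint.const_mul (∑' n : ℤ, E n))
      ((hΦcont.mul (Complex.continuous_exp.comp
        (continuous_const.mul Complex.continuous_ofReal))).aestronglyMeasurable) ?_
    filter_upwards with τ
    rw [norm_mul, hez]
    exact mul_le_mul_of_nonneg_right (hΦnorm τ) (Real.exp_pos _).le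
  have hint2 : IntegrableOn
      (fun τ : ℝ ↦ ((∑' k : ℤ, Real.exp (-(τ + 2*k*τm)^2/4) : ℝ) : ℂ) *
        Complex.exp (Complex.I*z*τ)) (Set.Ioi 0) := by
    have hfeq2 : (fun τ : ℝ ↦ ((∑' k : ℤ, Real.exp (-(τ + 2*k*τm)^2/4) : ℝ) : ℂ) *
        Complex.exp (Complex.I*z*τ))
        = fun τ : ℝ ↦ ((Real.sqrt π / τm : ℝ) : ℂ) *
            ((∑' n : ℤ, φ n τ) * Complex.exp (Complex.I*z*τ)) := by
      funext τ
      rw [hGp τ]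
      ring
    rw [hfeq2]
    exact hint2'.const_mul _
  have hint1 : IntegrableOn
      (fun τ : ℝ ↦ Complex.exp (-(τ:ℂ)^2/4) * Complex.exp (Complex.I*z*τ)) (Set.Ioi 0) := by
    refine Integrable.mono' hKint (Continuous.aestronglyMeasurable ?_) ?_
    · exact (Complex.continuous_exp.comp (by fun_prop)).mul
        (Complex.continuous_exp.comp (continuous_const.mul Complex.continuous_ofReal))
    filter_upwards with τ
    rw [norm_mul, hez]
    have hn : ‖Complex.exp (-(τ:ℂ)^2/4)‖ ≤ 1 := by
      rw [show -(τ:ℂ)^2/4 = ((-τ^2/4 : ℝ) : ℂ) by push_cast; ring, ← Complex.ofReal_exp,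
        Complex.norm_real, Real.norm_eq_abs, abs_of_pos (Real.exp_pos _)]
      rw [Real.exp_le_one_iff]
      nlinarith [sq_nonneg τ]
    calc ‖Complex.exp (-(τ:ℂ)^2/4)‖ * Real.exp (-z.im * τ)
        ≤ 1 * Real.exp (-z.im * τ) :=
          mul_le_mul_of_nonneg_right hn (Real.exp_pos _).le
      _ = Real.exp (-z.im * τ) := one_mul _
  -- conclude
  rw [hbracket, ← mul_sub, ← MeasureTheory.integral_sub hint1 hint2]
  congr 1
  refine MeasureTheory.setIntegral_congr_fun measurableSet_Ioi fun τ _ => ?_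
  rw [Complex.ofReal_sub, sub_mul, Complex.ofReal_exp]
  congr 3
  push_cast
  ring
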